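/- The Schmidt-Kalman covariance update with zeroed map gain preserves symmetry and positive semi-definiteness of the joint covariance: if P = [[P_RR, P_RM],[P_RMᵀ, P_MM]] is symmetric PSD, S = H P Hᵀ + R is positive definite with R PSD, and [K̄_R; K̄_M] = P Hᵀ, then P_SKF⁺ = P − [[K̄_R S⁻¹ K̄_Rᵀ, K̄_R S⁻¹ K̄_Mᵀ],[K̄_M S⁻¹ K̄_Rᵀ, 0]] is symmetric and positive semi-definite. -/

import Mathlib

open Matrix

/-- The Schmidt-Kalman covariance update with zeroed map gain preserves
symmetry and positive semi-definiteness of the joint covariance. -/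
theorem schmidt_update_psd
    (r n m : ℕ)
    (P : Matrix (Fin r ⊕ Fin n) (Fin r ⊕ Fin n) ℝ) (hP : P.PosSemidef)
    (H : Matrix (Fin m) (Fin r ⊕ Fin n) ℝ)
    (R : Matrix (Fin m) (Fin m) ℝ) (hR : R.PosSemidef)
    (S : Matrix (Fin m) (Fin m) ℝ) (hS : S = H * P * Hᵀ + R)
    (hSpd : S.PosDef)
    (KbarR : Matrix (Fin r) (Fin m) ℝ)
    (hKR : KbarR = Matrix.toRows₁ (P * Hᵀ))
    (KbarM : Matrix (Fin n) (Fin m) ℝ)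
    (hKM : KbarM = Matrix.toRows₂ (P * Hᵀ)) :
    (P - Matrix.fromBlocks (KbarR * S⁻¹ * KbarRᵀ) (KbarR * S⁻¹ * KbarMᵀ)
        (KbarM * S⁻¹ * KbarRᵀ) 0).IsSymm ∧
    (P - Matrix.fromBlocks (KbarR * S⁻¹ * KbarRᵀ) (KbarR * S⁻¹ * KbarMᵀ)
        (KbarM * S⁻¹ * KbarRᵀ) 0).PosSemidef := by
  haveI : Invertible S := hSpd.isUnit.invertible
  have hPsymm : Pᵀ = P := by
    rw [← conjTranspose_eq_transpose_of_trivial]; exact hP.isHermitian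
  set K : Matrix (Fin r ⊕ Fin n) (Fin m) ℝ := P * Hᵀ with hK
  have hKT : Kᵀ = H * P := by
    rw [hK, transpose_mul, transpose_transpose, hPsymm]
  have hKH : (H * P)ᴴ = K := by
    rw [conjTranspose_eq_transpose_of_trivial, ← hKT, transpose_transpose]
  -- The big matrix [[S, H*P],[P*Hᵀ, P]] is PSD
  have hbig : (fromBlocks S (H * P) (H * P)ᴴ P).PosSemidef := by
    have h1 : (fromRows H (1 : Matrix (Fin r ⊕ Fin n) (Fin r ⊕ Fin n) ℝ) * P *
        (fromRows H 1)ᴴ).PosSemidef := hP.mul_mul_conjTranspose_same _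
    have h2 : (fromRows (1 : Matrix (Fin m) (Fin m) ℝ)
        (0 : Matrix (Fin r ⊕ Fin n) (Fin m) ℝ) * R *
        (fromRows (1 : Matrix (Fin m) (Fin m) ℝ) 0)ᴴ).PosSemidef :=
      hR.mul_mul_conjTranspose_same _
    have e1 : fromRows H (1 : Matrix (Fin r ⊕ Fin n) (Fin r ⊕ Fin n) ℝ) * P *
        (fromRows H 1)ᴴ
        = fromBlocks (H * P * Hᵀ) (H * P) (P * Hᵀ) P := by
      rw [conjTranspose_eq_transpose_of_trivial, transpose_fromRows, transpose_one,
        fromRows_mul, fromRows_mul_fromCols]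
      simp
    have e2 : fromRows (1 : Matrix (Fin m) (Fin m) ℝ)
        (0 : Matrix (Fin r ⊕ Fin n) (Fin m) ℝ) * R *
        (fromRows (1 : Matrix (Fin m) (Fin m) ℝ) 0)ᴴ
        = fromBlocks R 0 0 (0 : Matrix (Fin r ⊕ Fin n) (Fin r ⊕ Fin n) ℝ) := by
      rw [conjTranspose_eq_transpose_of_trivial, transpose_fromRows, transpose_one,
        transpose_zero, fromRows_mul, fromRows_mul_fromCols]
      simp
    rw [e1] at h1; rw [e2] at h2
    have := h1.add h2
    rw [fromBlocks_add] at this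
    simp only [add_zero] at this
    rw [hKH, hK, hS]
    exact this
  -- Schur complement: the EKF update is PSD
  have hEKF : (P - K * S⁻¹ * (H * P)).PosSemidef := by
    have := (PosDef.fromBlocks₁₁ (A := S) (H * P) P hSpd).mp hbig
    rwa [hKH] at this
  -- the correction term
  have hcorr : (fromBlocks (0 : Matrix (Fin r) (Fin r) ℝ) (0 : Matrix (Fin r) (Fin n) ℝ)
      (0 : Matrix (Fin n) (Fin r) ℝ) (KbarM * S⁻¹ * KbarMᵀ)).PosSemidef := by
    have hBM : (KbarM * S⁻¹ * KbarMᵀ).PosSemidef := by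
      have := hSpd.inv.posSemidef.mul_mul_conjTranspose_same KbarM
      rwa [conjTranspose_eq_transpose_of_trivial] at this
    have h3 := hBM.mul_mul_conjTranspose_same
      (fromRows (0 : Matrix (Fin r) (Fin n) ℝ) (1 : Matrix (Fin n) (Fin n) ℝ))
    rw [conjTranspose_eq_transpose_of_trivial, transpose_fromRows, transpose_one,
      transpose_zero, fromRows_mul, fromRows_mul_fromCols] at h3
    simpa using h3
  -- Key decomposition
  have hdecomp : P - fromBlocks (KbarR * S⁻¹ * KbarRᵀ) (KbarR * S⁻¹ * KbarMᵀ)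
        (KbarM * S⁻¹ * KbarRᵀ) 0
      = (P - K * S⁻¹ * (H * P)) +
        fromBlocks 0 0 0 (KbarM * S⁻¹ * KbarMᵀ) := by
    have hKfr : K = fromRows KbarR KbarM := by
      rw [hKR, hKM, fromRows_toRows]
    have hfull : K * S⁻¹ * (H * P)
        = fromBlocks (KbarR * S⁻¹ * KbarRᵀ) (KbarR * S⁻¹ * KbarMᵀ)
          (KbarM * S⁻¹ * KbarRᵀ) (KbarM * S⁻¹ * KbarMᵀ) := by
      rw [← hKT, hKfr, transpose_fromRows, fromRows_mul, fromRows_mul_fromCols]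
    have hsum : fromBlocks (KbarR * S⁻¹ * KbarRᵀ) (KbarR * S⁻¹ * KbarMᵀ)
          (KbarM * S⁻¹ * KbarRᵀ) (KbarM * S⁻¹ * KbarMᵀ)
        = fromBlocks (KbarR * S⁻¹ * KbarRᵀ) (KbarR * S⁻¹ * KbarMᵀ)
          (KbarM * S⁻¹ * KbarRᵀ) 0 + fromBlocks 0 0 0 (KbarM * S⁻¹ * KbarMᵀ) := by
      rw [fromBlocks_add]; simp
    rw [hfull, hsum]; abel
  rw [hdecomp]
  have hfinal := hEKF.add hcorr
  exact ⟨by rw [← conjTranspose_eq_transpose_of_trivial]; exact hfinal.isHermitian, hfinal⟩
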